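/- For every r, s ∈ [0, ∞] with s ≤ r, there exists a sequence (d_n) of positive natural numbers with d_n ≥ d_{n-1} + d_{n-2} for all n ≥ 3, limsup_{n→∞} d_n / 2^n = 2r / log 2, and liminf_{n→∞} d_n / 2^n = 2s / log 2. -/

import Mathlib

open Filter

namespace SuperFibAux

noncomputable def cseq (β : ℝ) (h : ℕ → ℝ) (n : ℕ) : ℝ :=
  max β (h (Nat.log 2 n) * (9/10 : ℝ) ^ (n - 2 ^ Nat.log 2 n))

noncomputable def dseq (β : ℝ) (h : ℕ → ℝ) (n : ℕ) : ℕ :=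
  ⌊cseq β h n * 2 ^ n⌋₊ + Nat.fib (n + 1)

variable {β : ℝ} {h : ℕ → ℝ}

lemma beta_le_cseq (n : ℕ) : β ≤ cseq β h n := le_max_left _ _

lemma cseq_nonneg (hβ : 0 ≤ β) (n : ℕ) : 0 ≤ cseq β h n :=
  hβ.trans (beta_le_cseq n)

lemma pow_le_one' (m : ℕ) : (9/10 : ℝ) ^ m ≤ 1 :=
  pow_le_one₀ (by norm_num) (by norm_num)

lemma cseq_le (hh0 : ∀ k, 0 ≤ h k) (hmono : Monotone h) {j n : ℕ} (hjn : j ≤ n) :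
    cseq β h j ≤ max β (h (Nat.log 2 n)) := by
  refine max_le_max le_rfl ?_
  calc h (Nat.log 2 j) * (9/10 : ℝ) ^ (j - 2 ^ Nat.log 2 j)
      ≤ h (Nat.log 2 j) * 1 := mul_le_mul_of_nonneg_left (pow_le_one' _) (hh0 _)
    _ = h (Nat.log 2 j) := mul_one _
    _ ≤ h (Nat.log 2 n) := hmono (Nat.log_mono_right hjn)

lemma maxG {x : ℝ} (hβ : 0 ≤ β) (hx : 0 ≤ x) :
    max β (x * (9/10)) / 2 + max β x / 4 ≤ max β (x * (81/100)) := by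
  rcases le_total x β with h1 | h1
  · have e2 : max β (x * (9/10)) = β := max_eq_left (by nlinarith)
    have e1 : max β x = β := max_eq_left h1
    rw [e1, e2]
    calc β / 2 + β / 4 ≤ β := by linarith
      _ ≤ max β (x * (81/100)) := le_max_left _ _
  · have e1 : max β x = x := max_eq_right h1
    rcases le_total (x * (9/10)) β with h2 | h2
    · rw [max_eq_left h2, e1]
      have hx2 : x ≤ 2 * β := by nlinarith
      calc β / 2 + x / 4 ≤ β := by linarith
        _ ≤ max β (x * (81/100)) := le_max_left _ _
    · rw [max_eq_right h2, e1]
      have := le_max_right β (x * (81/100))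
      nlinarith

lemma cseq_rec (hβ : 0 ≤ β) (hh0 : ∀ k, 0 ≤ h k) (hmono : Monotone h) :
    ∀ n, 3 ≤ n → cseq β h (n-1) / 2 + cseq β h (n-2) / 4 ≤ cseq β h n := by
  intro n hn
  have h2k : 2 ^ Nat.log 2 n ≤ n := Nat.pow_log_le_self 2 (by omega)
  have hlt : n < 2 ^ (Nat.log 2 n + 1) := Nat.lt_pow_succ_log_self (by norm_num) n
  set k := Nat.log 2 n with hk
  have hb1 : cseq β h (n-1) ≤ max β (h k) := cseq_le hh0 hmono (by omega)
  have hb2 : cseq β h (n-2) ≤ max β (h k) := cseq_le hh0 hmono (by omega)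
  have hM : 0 ≤ max β (h k) := le_max_of_le_left hβ
  rcases (by omega : n = 2^k ∨ n = 2^k + 1 ∨ 2^k + 2 ≤ n) with hc | hc | hc
  · -- spike
    have e : cseq β h n = max β (h k) := by
      rw [cseq, ← hk, (by omega : n - 2^k = 0), pow_zero, mul_one]
    rw [e]
    have hc1 : 0 ≤ cseq β h (n-2) := cseq_nonneg hβ _
    have hc2 : 0 ≤ cseq β h (n-1) := cseq_nonneg hβ _
    linarith
  · -- m = 1
    have e : cseq β h n = max β (h k * (9/10)) := by
      rw [cseq, ← hk, (by omega : n - 2^k = 1), pow_one]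
    have e1 : cseq β h (n-1) = max β (h k) := by
      have hn1 : n - 1 = 2 ^ k := by omega
      rw [cseq, hn1, Nat.log_pow (by norm_num), Nat.sub_self, pow_zero, mul_one]
    rw [e, e1]
    have h0 := hh0 k
    rcases le_total (h k) β with h1 | h1
    · have e2 : max β (h k) = β := max_eq_left h1
      have e3 : β ≤ max β (h k * (9/10)) := le_max_left _ _
      rw [e2] at hb2 ⊢
      have hc1 : 0 ≤ cseq β h (n-2) := cseq_nonneg hβ _
      linarith
    · have e2 : max β (h k) = h k := max_eq_right h1
      have e3 : h k * (9/10) ≤ max β (h k * (9/10)) := le_max_right _ _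
      rw [e2] at hb2 ⊢
      have hc1 : 0 ≤ cseq β h (n-2) := cseq_nonneg hβ _
      linarith
  · -- m ≥ 2
    obtain ⟨m, hm⟩ : ∃ m, n - 2^k = m + 2 := ⟨n - 2^k - 2, by omega⟩
    have e1 : Nat.log 2 (n-1) = k :=
      Nat.log_eq_of_pow_le_of_lt_pow (by omega) (by omega)
    have e2 : Nat.log 2 (n-2) = k :=
      Nat.log_eq_of_pow_le_of_lt_pow (by omega) (by omega)
    have f0 : cseq β h n = max β ((h k * (9/10)^m) * (81/100)) := by
      rw [cseq, ← hk, hm]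
      congr 1
      rw [pow_add]; ring
    have f1 : cseq β h (n-1) = max β ((h k * (9/10)^m) * (9/10)) := by
      rw [cseq, e1, (by omega : n - 1 - 2^k = m + 1)]
      congr 1
      rw [pow_add]; ring
    have f2 : cseq β h (n-2) = max β (h k * (9/10)^m) := by
      rw [cseq, e2, (by omega : n - 2 - 2^k = m)]
    rw [f0, f1, f2]
    exact maxG hβ (mul_nonneg (hh0 k) (pow_nonneg (by norm_num) m))


lemma dseq_pos (n : ℕ) : 0 < dseq β h n :=
  Nat.add_pos_right _ (Nat.fib_pos.mpr (Nat.succ_pos n))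

lemma dseq_rec (hβ : 0 ≤ β) (hh0 : ∀ k, 0 ≤ h k) (hmono : Monotone h) :
    ∀ n, 3 ≤ n → dseq β h (n-1) + dseq β h (n-2) ≤ dseq β h n := by
  intro n hn
  obtain ⟨m, rfl⟩ : ∃ m, n = m + 3 := ⟨n - 3, by omega⟩
  have e1 : m + 3 - 1 = m + 2 := by omega
  have e2 : m + 3 - 2 = m + 1 := by omega
  rw [e1, e2, dseq, dseq, dseq]
  have hfib : Nat.fib (m + 2 + 1) + Nat.fib (m + 1 + 1) = Nat.fib (m + 3 + 1) := by
    have h' : Nat.fib (m+4) = Nat.fib (m+2) + Nat.fib (m+3) := Nat.fib_add_two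
    simpa [show m+2+1 = m+3 from rfl, show m+1+1 = m+2 from rfl,
      show m+3+1 = m+4 from rfl, Nat.add_comm] using h'.symm
  have hrec := cseq_rec hβ hh0 hmono (m+3) (by omega)
  rw [e1, e2] at hrec
  have hp : (0:ℝ) < 2 ^ m := by positivity
  have hfl : ⌊cseq β h (m+2) * 2 ^ (m+2)⌋₊ + ⌊cseq β h (m+1) * 2 ^ (m+1)⌋₊
      ≤ ⌊cseq β h (m+3) * 2 ^ (m+3)⌋₊ := by
    have hnn1 : (0:ℝ) ≤ cseq β h (m+2) * 2 ^ (m+2) := by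
      have := cseq_nonneg (h := h) hβ (m+2); positivity
    have hnn2 : (0:ℝ) ≤ cseq β h (m+1) * 2 ^ (m+1) := by
      have := cseq_nonneg (h := h) hβ (m+1); positivity
    have key : cseq β h (m+2) * 2 ^ (m+2) + cseq β h (m+1) * 2 ^ (m+1)
        ≤ cseq β h (m+3) * 2 ^ (m+3) := by
      have ep : (2:ℝ) ^ (m+3) = 8 * 2 ^ m := by ring
      have ep2 : (2:ℝ) ^ (m+2) = 4 * 2 ^ m := by ring
      have ep1 : (2:ℝ) ^ (m+1) = 2 * 2 ^ m := by ring
      rw [ep, ep2, ep1]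
      nlinarith
    calc ⌊cseq β h (m+2) * 2 ^ (m+2)⌋₊ + ⌊cseq β h (m+1) * 2 ^ (m+1)⌋₊
        ≤ ⌊cseq β h (m+2) * 2 ^ (m+2) + cseq β h (m+1) * 2 ^ (m+1)⌋₊ := by
          apply Nat.le_floor
          push_cast
          gcongr <;> [exact Nat.floor_le hnn1; exact Nat.floor_le hnn2]
      _ ≤ _ := Nat.floor_mono key
  omega

lemma fib_le_real (n : ℕ) : (Nat.fib (n+1) : ℝ) ≤ 2 * (9/5) ^ n := by
  induction n using Nat.strong_induction_on with
  | _ n ih =>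
    match n with
    | 0 => norm_num
    | 1 => norm_num [Nat.fib]
    | (m+2) =>
      have h1 := ih (m+1) (by omega)
      have h2 := ih m (by omega)
      have hf : Nat.fib (m+2+1) = Nat.fib (m+1) + Nat.fib (m+2) := Nat.fib_add_two
      rw [hf]
      push_cast
      have hpow : (0:ℝ) ≤ (9/5) ^ m := by positivity
      rw [pow_succ, pow_succ]
      rw [pow_succ] at h1
      nlinarith

lemma dseq_div_le (hβ : 0 ≤ β) (n : ℕ) :
    (dseq β h n : ℝ) / 2 ^ n ≤ cseq β h n + 2 * (9/10) ^ n := by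
  have hp : (0:ℝ) < 2 ^ n := by positivity
  rw [div_le_iff₀ hp]
  have hnn : (0:ℝ) ≤ cseq β h n * 2 ^ n := by
    have := cseq_nonneg (h := h) hβ n; positivity
  have h1 : (⌊cseq β h n * 2 ^ n⌋₊ : ℝ) ≤ cseq β h n * 2 ^ n := Nat.floor_le hnn
  have h2 := fib_le_real n
  have h3 : (9/10 : ℝ) ^ n * 2 ^ n = (9/5) ^ n := by
    rw [← mul_pow]; norm_num
  rw [dseq]
  push_cast
  nlinarith

lemma dseq_div_ge (hβ : 0 ≤ β) (n : ℕ) :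
    cseq β h n - (1/2) ^ n ≤ (dseq β h n : ℝ) / 2 ^ n := by
  have hp : (0:ℝ) < 2 ^ n := by positivity
  rw [le_div_iff₀ hp]
  have h1 : cseq β h n * 2 ^ n - 1 < (⌊cseq β h n * 2 ^ n⌋₊ : ℝ) :=
    Nat.sub_one_lt_floor _
  have h3 : (1/2 : ℝ) ^ n * 2 ^ n = 1 := by
    rw [← mul_pow]; norm_num
  have h4 : (0:ℝ) ≤ Nat.fib (n+1) := by positivity
  rw [dseq]
  push_cast
  nlinarith

lemma cseq_pow2 (k : ℕ) : cseq β h (2 ^ k) = max β (h k) := by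
  rw [cseq, Nat.log_pow (by norm_num), Nat.sub_self, pow_zero, mul_one]

lemma cseq_end (k : ℕ) :
    cseq β h (2 ^ (k+1) - 1) = max β (h k * (9/10) ^ (2 ^ k - 1)) := by
  have h1 : (1:ℕ) ≤ 2 ^ k := Nat.one_le_two_pow
  have h2 : (2:ℕ) ^ (k+1) = 2 * 2 ^ k := by rw [pow_succ]; ring
  have hlog : Nat.log 2 (2 ^ (k+1) - 1) = k :=
    Nat.log_eq_of_pow_le_of_lt_pow (by omega) (by omega)
  rw [cseq, hlog]
  congr 3
  omega


lemma X_eq (n : ℕ) :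
    (dseq β h n : ENNReal) / 2 ^ n = ENNReal.ofReal ((dseq β h n : ℝ) / 2 ^ n) := by
  rw [ENNReal.ofReal_div_of_pos (by positivity), ENNReal.ofReal_natCast,
    ENNReal.ofReal_pow (by norm_num)]
  norm_num

lemma tendsto_halfpow : Tendsto (fun n : ℕ => (1/2 : ℝ) ^ n) atTop (nhds 0) :=
  tendsto_pow_atTop_nhds_zero_of_lt_one (by norm_num) (by norm_num)

lemma tendsto_ninetenths : Tendsto (fun n : ℕ => (9/10 : ℝ) ^ n) atTop (nhds 0) :=
  tendsto_pow_atTop_nhds_zero_of_lt_one (by norm_num) (by norm_num)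

lemma tendsto_small : Tendsto (fun n : ℕ => 2 * (9/10 : ℝ) ^ n) atTop (nhds 0) := by
  simpa using tendsto_ninetenths.const_mul 2

lemma decay_aux {g : ℕ → ℝ} (hg0 : ∀ k, 0 ≤ g k)
    (hgt : Tendsto (fun k : ℕ => g k * (9/10 : ℝ) ^ k) atTop (nhds 0)) :
    Tendsto (fun k : ℕ => g k * (9/10 : ℝ) ^ (2 ^ k - 1)) atTop (nhds 0) := by
  refine squeeze_zero (fun k => by have := hg0 k; positivity) (fun k => ?_) hgt
  refine mul_le_mul_of_nonneg_left ?_ (hg0 k)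
  refine pow_le_pow_of_le_one (by norm_num) (by norm_num) ?_
  have := Nat.lt_two_pow_self (n := k)
  omega

lemma liminf_X (hβ : 0 ≤ β) (hh0 : ∀ k, 0 ≤ h k) (hmono : Monotone h)
    (hdecay : Tendsto (fun k : ℕ => h k * (9/10 : ℝ) ^ (2 ^ k - 1)) atTop (nhds 0)) :
    Filter.liminf (fun n => (dseq β h n : ENNReal) / 2 ^ n) Filter.atTop
      = ENNReal.ofReal β := by
  apply le_antisymm
  · apply le_of_forall_gt_imp_ge_of_dense
    intro c hc
    have hY : Tendsto (fun k : ℕ => ENNReal.ofReal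
        (max β (h k * (9/10 : ℝ) ^ (2 ^ k - 1)) + 2 * (9/10 : ℝ) ^ (2 ^ (k+1) - 1)))
        atTop (nhds (ENNReal.ofReal β)) := by
      have t1 : Tendsto (fun k : ℕ => max β (h k * (9/10 : ℝ) ^ (2 ^ k - 1)))
          atTop (nhds β) := by
        have := (tendsto_const_nhds (x := β) (f := atTop (α := ℕ))).max hdecay
        simpa [max_eq_left hβ] using this
      have t2 : Tendsto (fun k : ℕ => 2 * (9/10 : ℝ) ^ (2 ^ (k+1) - 1))
          atTop (nhds 0) := by
        refine squeeze_zero (fun k => by positivity) (fun k => ?_) tendsto_small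
        have hk2 : k ≤ 2 ^ (k+1) - 1 := by
          have h1 := Nat.lt_two_pow_self (n := k)
          have h2 : (2:ℕ) ^ k ≤ 2 ^ (k+1) := Nat.pow_le_pow_right (by norm_num) (by omega)
          omega
        have := pow_le_pow_of_le_one (by norm_num : (0:ℝ) ≤ 9/10) (by norm_num) hk2
        nlinarith [pow_nonneg (by norm_num : (0:ℝ) ≤ 9/10) (2 ^ (k+1) - 1)]
      have := ENNReal.tendsto_ofReal (t1.add t2)
      simpa using this
    have hev : ∀ᶠ k : ℕ in atTop,
        (dseq β h (2 ^ (k+1) - 1) : ENNReal) / 2 ^ (2 ^ (k+1) - 1) ≤ c := by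
      filter_upwards [hY.eventually_lt_const hc] with k hk
      refine le_of_lt (lt_of_le_of_lt ?_ hk)
      rw [X_eq]
      apply ENNReal.ofReal_le_ofReal
      calc (dseq β h (2 ^ (k+1) - 1) : ℝ) / 2 ^ (2 ^ (k+1) - 1)
          ≤ cseq β h (2 ^ (k+1) - 1) + 2 * (9/10 : ℝ) ^ (2 ^ (k+1) - 1) :=
            dseq_div_le hβ _
        _ = _ := by rw [cseq_end]
    refine liminf_le_of_frequently_le ?_
    rw [frequently_atTop]
    intro N
    obtain ⟨K, hK⟩ := eventually_atTop.1 hev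
    refine ⟨2 ^ (max K N + 1) - 1, ?_, hK _ (le_max_left K N)⟩
    have h1 := Nat.lt_two_pow_self (n := max K N)
    have h2 : (2:ℕ) ^ (max K N) ≤ 2 ^ (max K N + 1) :=
      Nat.pow_le_pow_right (by norm_num) (by omega)
    have h3 := le_max_right K N
    omega
  · have hmain : ∀ n : ℕ, ENNReal.ofReal (β - (1/2 : ℝ) ^ n)
        ≤ (dseq β h n : ENNReal) / 2 ^ n := by
      intro n
      rw [X_eq]
      apply ENNReal.ofReal_le_ofReal
      have h1 := dseq_div_ge (h := h) hβ n
      have h2 := beta_le_cseq (β := β) (h := h) n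
      linarith
    calc ENNReal.ofReal β
        = liminf (fun n : ℕ => ENNReal.ofReal (β - (1/2 : ℝ) ^ n)) atTop := by
          symm
          exact Tendsto.liminf_eq (ENNReal.tendsto_ofReal
            (by simpa using tendsto_const_nhds.sub tendsto_halfpow))
      _ ≤ _ := liminf_le_liminf (Eventually.of_forall hmain)


lemma limsup_X_const {α : ℝ} (hβ : 0 ≤ β) (hβα : β ≤ α) :
    Filter.limsup (fun n => (dseq β (fun _ => α) n : ENNReal) / 2 ^ n) Filter.atTop
      = ENNReal.ofReal α := by
  have hα : 0 ≤ α := hβ.trans hβα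
  apply le_antisymm
  · have hub : ∀ n, (dseq β (fun _ => α) n : ENNReal) / 2 ^ n
        ≤ ENNReal.ofReal (α + 2 * (9/10 : ℝ) ^ n) := by
      intro n
      rw [X_eq]
      apply ENNReal.ofReal_le_ofReal
      have h1 := dseq_div_le (h := fun _ => α) hβ n
      have h2 : cseq β (fun _ => α) n ≤ α := by
        have := cseq_le (β := β) (h := fun _ => α) (fun _ => hα) monotone_const
          (le_refl n)
        simpa [max_eq_right hβα] using this
      linarith
    calc Filter.limsup (fun n => (dseq β (fun _ => α) n : ENNReal) / 2 ^ n) atTop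
        ≤ Filter.limsup (fun n : ℕ => ENNReal.ofReal (α + 2 * (9/10 : ℝ) ^ n)) atTop :=
          limsup_le_limsup (Eventually.of_forall hub)
      _ = ENNReal.ofReal α := Tendsto.limsup_eq (ENNReal.tendsto_ofReal
            (by simpa using tendsto_const_nhds.add tendsto_small))
  · by_contra hlt
    push_neg at hlt
    obtain ⟨c, hc1, hc2⟩ := exists_between hlt
    have hlow : ∀ k : ℕ, ENNReal.ofReal (α - (1/2 : ℝ) ^ k)
        ≤ (dseq β (fun _ => α) (2 ^ k) : ENNReal) / 2 ^ (2 ^ k) := by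
      intro k
      rw [X_eq]
      apply ENNReal.ofReal_le_ofReal
      have h1 := dseq_div_ge (h := fun _ => α) hβ (2 ^ k)
      have h2 : cseq β (fun _ => α) (2 ^ k) = α := by
        rw [cseq_pow2, max_eq_right hβα]
      have h3 : ((1:ℝ)/2) ^ (2 ^ k) ≤ (1/2) ^ k :=
        pow_le_pow_of_le_one (by norm_num) (by norm_num) (Nat.lt_two_pow_self (n := k)).le
      linarith
    have htends : Tendsto (fun k : ℕ => ENNReal.ofReal (α - (1/2 : ℝ) ^ k)) atTop
        (nhds (ENNReal.ofReal α)) :=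
      ENNReal.tendsto_ofReal (by simpa using tendsto_const_nhds.sub tendsto_halfpow)
    have hfreq : ∃ᶠ n in atTop,
        c ≤ (dseq β (fun _ => α) n : ENNReal) / 2 ^ n := by
      rw [frequently_atTop]
      intro N
      obtain ⟨K, hK⟩ := eventually_atTop.1 (htends.eventually_const_lt hc2)
      refine ⟨2 ^ (max K N), le_trans (le_max_right K N) Nat.lt_two_pow_self.le, ?_⟩
      exact le_trans (hK _ (le_max_left K N)).le (hlow _)
    exact absurd (le_limsup_of_frequently_le hfreq) (not_le.mpr hc1)

lemma limsup_X_top (hβ : 0 ≤ β) :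
    Filter.limsup (fun n => (dseq β (fun k => (k : ℝ)) n : ENNReal) / 2 ^ n)
      Filter.atTop = ⊤ := by
  refine eq_top_iff.mpr ?_
  by_contra hlt
  push_neg at hlt
  obtain ⟨N, hN⟩ := ENNReal.exists_nat_gt hlt.ne
  have hfreq : ∃ᶠ n in atTop,
      (N : ENNReal) ≤ (dseq β (fun k => (k : ℝ)) n : ENNReal) / 2 ^ n := by
    rw [frequently_atTop]
    intro M
    refine ⟨2 ^ (max M (N+1)), le_trans (le_max_left M (N+1)) Nat.lt_two_pow_self.le, ?_⟩
    have h1 := dseq_div_ge (h := fun k => (k : ℝ)) hβ (2 ^ (max M (N+1)))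
    rw [cseq_pow2] at h1
    have h0 : ((1:ℝ)/2) ^ (2 ^ (max M (N+1))) ≤ 1 :=
      pow_le_one₀ (by norm_num) (by norm_num)
    have h2 : ((N:ℝ)) + 1 ≤ ((max M (N+1) : ℕ) : ℝ) := by
      exact_mod_cast (by omega : N + 1 ≤ max M (N+1))
    have h3 : ((max M (N+1) : ℕ) : ℝ) ≤ max β ((max M (N+1) : ℕ) : ℝ) :=
      le_max_right _ _
    calc (N : ENNReal) = ENNReal.ofReal (N : ℝ) := (ENNReal.ofReal_natCast N).symm
      _ ≤ ENNReal.ofReal ((dseq β (fun k => (k : ℝ)) (2 ^ (max M (N+1))) : ℝ)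
            / 2 ^ (2 ^ (max M (N+1)))) := ENNReal.ofReal_le_ofReal (by linarith)
      _ = _ := (X_eq _).symm
  exact absurd (le_limsup_of_frequently_le hfreq) (not_le.mpr hN)


lemma key (A B : ENNReal) (hBA : B ≤ A) :
    ∃ d : ℕ → ℕ,
      (∀ n, 0 < d n) ∧
      (∀ n, 3 ≤ n → d (n - 1) + d (n - 2) ≤ d n) ∧
      Filter.limsup (fun n => (d n : ENNReal) / 2 ^ n) Filter.atTop = A ∧
      Filter.liminf (fun n => (d n : ENNReal) / 2 ^ n) Filter.atTop = B := by
  rcases eq_or_ne A ⊤ with rfl | hA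
  · rcases eq_or_ne B ⊤ with rfl | hB
    · refine ⟨fun n => 4 ^ n, fun n => Nat.pow_pos (by norm_num), ?_, ?_, ?_⟩
      · intro n hn
        obtain ⟨m, rfl⟩ : ∃ m, n = m + 3 := ⟨n - 3, by omega⟩
        have e1 : m + 3 - 1 = m + 2 := by omega
        have e2 : m + 3 - 2 = m + 1 := by omega
        show 4 ^ (m+3-1) + 4 ^ (m+3-2) ≤ 4 ^ (m + 3)
        rw [e1, e2, show (4:ℕ)^(m+1) = 4*4^m by ring, show (4:ℕ)^(m+2) = 16*4^m by ring,
          show (4:ℕ)^(m+3) = 64*4^m by ring]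
        omega
      all_goals {
        have hfun : (fun n : ℕ => ((4 ^ n : ℕ) : ENNReal) / 2 ^ n)
            = fun n : ℕ => (2 : ENNReal) ^ n := by
          funext n
          push_cast
          rw [show (4:ENNReal) = 2*2 by norm_num, mul_pow, mul_div_assoc,
            ENNReal.div_self (pow_ne_zero n (by norm_num))
              (ENNReal.pow_ne_top ENNReal.ofNat_ne_top), mul_one]
        rw [hfun]
        have htop : Tendsto (fun n : ℕ => (2 : ENNReal) ^ n) atTop (nhds ⊤) := by
          have hle : (fun n : ℕ => ((n : ℕ) : ENNReal)) ≤ᶠ[atTop]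
              fun n : ℕ => (2 : ENNReal) ^ n :=
            Eventually.of_forall fun n =>
              show ((n : ℕ) : ENNReal) ≤ (2 : ENNReal) ^ n by
                exact_mod_cast (Nat.lt_two_pow_self (n := n)).le
          exact tendsto_nhds_top_mono ENNReal.tendsto_nat_nhds_top hle
        first
          | exact htop.limsup_eq
          | exact htop.liminf_eq }
    · set β := B.toReal with hβdef
      have hβ : 0 ≤ β := ENNReal.toReal_nonneg
      have hmono : Monotone (fun k : ℕ => (k : ℝ)) := Nat.mono_cast
      have hh0 : ∀ k : ℕ, (0:ℝ) ≤ (k : ℝ) := fun k => Nat.cast_nonneg k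
      have hdecay : Tendsto (fun k : ℕ => (k : ℝ) * (9/10 : ℝ) ^ (2 ^ k - 1))
          atTop (nhds 0) :=
        decay_aux hh0 (tendsto_self_mul_const_pow_of_lt_one (by norm_num) (by norm_num))
      exact ⟨dseq β (fun k => (k : ℝ)), fun n => dseq_pos n,
        dseq_rec hβ hh0 hmono, limsup_X_top hβ,
        (liminf_X hβ hh0 hmono hdecay).trans (ENNReal.ofReal_toReal hB)⟩
  · have hB : B ≠ ⊤ := fun hb => hA (top_le_iff.mp (hb ▸ hBA))
    set α := A.toReal
    set β := B.toReal
    have hβ : 0 ≤ β := ENNReal.toReal_nonneg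
    have hβα : β ≤ α := ENNReal.toReal_mono hA hBA
    have hα : 0 ≤ α := hβ.trans hβα
    have hh0 : ∀ _ : ℕ, (0:ℝ) ≤ α := fun _ => hα
    have hdecay : Tendsto (fun k : ℕ => α * (9/10 : ℝ) ^ (2 ^ k - 1)) atTop (nhds 0) :=
      decay_aux hh0 (by simpa using tendsto_ninetenths.const_mul α)
    exact ⟨dseq β (fun _ => α), fun n => dseq_pos n,
      dseq_rec hβ hh0 monotone_const,
      (limsup_X_const hβ hβα).trans (ENNReal.ofReal_toReal hA),
      (liminf_X hβ hh0 monotone_const hdecay).trans (ENNReal.ofReal_toReal hB)⟩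

end SuperFibAux

theorem exists_superfib_sequence_with_limsup_liminf (r s : ENNReal) (hs : s ≤ r) :
    ∃ d : ℕ → ℕ,
      (∀ n, 0 < d n) ∧
      (∀ n, 3 ≤ n → d (n - 1) + d (n - 2) ≤ d n) ∧
      Filter.limsup (fun n => (d n : ENNReal) / 2 ^ n) Filter.atTop
        = 2 * r / ENNReal.ofReal (Real.log 2) ∧
      Filter.liminf (fun n => (d n : ENNReal) / 2 ^ n) Filter.atTop
        = 2 * s / ENNReal.ofReal (Real.log 2) := by
  exact SuperFibAux.key _ _ (ENNReal.div_le_div_right (mul_le_mul_right hs 2) _)
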